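/- Let σ : ℝ^d → ℝ^{d×m} and b : ℝ^d → ℝ^d be measurable with ‖σ(z)‖ ≤ M and |b(z)| ≤ M for all z ∈ ℝ^d. Fix T > 0, x ∈ ℝ^d, n ∈ ℕ, and g : [0,T] → ℝ^m measurable with ∫₀^T |g(s)|² ds ≤ e. Let φ_n(t) = k·2^{−n} for t ∈ [k·2^{−n}, (k+1)·2^{−n}), and let X^n : [0,T] → ℝ^d be continuous with X^n(t) = x + ∫₀^t (σ(X^n(φ_n(s)))·g(s) + b(X^n(φ_n(s)))) ds for all t ∈ [0,T]. Then for every t ∈ [0,T], |X^n(t) − X^n(φ_n(t))| ≤ 2^{−n/2}·M·(√e + 1). -/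

import Mathlib

/-- Matrix–vector multiplication, with Euclidean norms on the vector spaces. -/
noncomputable def mulVecE {d m : ℕ} (A : Matrix (Fin d) (Fin m) ℝ)
    (v : EuclideanSpace ℝ (Fin m)) : EuclideanSpace ℝ (Fin d) :=
  WithLp.toLp 2 (fun i => ∑ j, A i j * v j)

/-- The Hilbert–Schmidt (Frobenius) norm of a real `d × m` matrix. -/
noncomputable def frobNorm {d m : ℕ} (A : Matrix (Fin d) (Fin m) ℝ) : ℝ :=
  Real.sqrt (∑ i, ∑ j, (A i j) ^ 2)

/-- The dyadic discretisation `φₙ(t) = k·2⁻ⁿ` for `t ∈ [k·2⁻ⁿ, (k+1)·2⁻ⁿ)`. -/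
noncomputable def phiN (n : ℕ) (t : ℝ) : ℝ := (⌊t * 2 ^ n⌋ : ℝ) / 2 ^ n

lemma mulVecE_norm_le {d m : ℕ} (A : Matrix (Fin d) (Fin m) ℝ)
    (v : EuclideanSpace ℝ (Fin m)) : ‖mulVecE A v‖ ≤ frobNorm A * ‖v‖ := by
  rw [EuclideanSpace.norm_eq, EuclideanSpace.norm_eq, frobNorm,
    ← Real.sqrt_mul (by positivity)]
  apply Real.sqrt_le_sqrt
  rw [Finset.sum_mul]
  apply Finset.sum_le_sum
  intro i _
  have h1 : ‖mulVecE A v i‖ ^ 2 = (∑ j, A i j * v j) ^ 2 := by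
    rw [Real.norm_eq_abs, sq_abs]; rfl
  rw [h1]
  calc (∑ j, A i j * v j) ^ 2 ≤ (∑ j, (A i j) ^ 2) * (∑ j, (v j) ^ 2) :=
        Finset.sum_mul_sq_le_sq_mul_sq _ _ _
    _ = (∑ j, (A i j) ^ 2) * ∑ j, ‖v j‖ ^ 2 := by
        simp [Real.norm_eq_abs, sq_abs]

open MeasureTheory intervalIntegral

/-- Euler polygonal approximation estimate: if `σ`, `b` are measurable and bounded
by `M`, the control derivative `g` has energy `∫₀ᵀ |g|² ≤ e₀`, and `Xⁿ` is the Euler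
polygonal approximation with step `2⁻ⁿ`, then for every `t ∈ [0, T]`,
`|Xⁿ(t) − Xⁿ(φₙ(t))| ≤ 2^{-n/2}·M·(√e₀ + 1)`. -/
theorem euler_step_estimate (d m : ℕ)
    (σ : EuclideanSpace ℝ (Fin d) → Matrix (Fin d) (Fin m) ℝ)
    (b : EuclideanSpace ℝ (Fin d) → EuclideanSpace ℝ (Fin d))
    (hσm : Measurable fun z i j => σ z i j) (hbm : Measurable b)
    (M : ℝ) (hσbd : ∀ z, frobNorm (σ z) ≤ M) (hbbd : ∀ z, ‖b z‖ ≤ M)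
    (T : ℝ) (hT : 0 < T) (x : EuclideanSpace ℝ (Fin d)) (n : ℕ)
    (g : ℝ → EuclideanSpace ℝ (Fin m)) (hgm : Measurable g) (e₀ : ℝ)
    (hgi : IntervalIntegrable (fun s => ‖g s‖ ^ 2) MeasureTheory.volume 0 T)
    (hge : (∫ s in (0:ℝ)..T, ‖g s‖ ^ 2) ≤ e₀)
    (Xn : ℝ → EuclideanSpace ℝ (Fin d)) (hXc : ContinuousOn Xn (Set.Icc 0 T))
    (hXeq : ∀ t ∈ Set.Icc (0:ℝ) T,
      Xn t = x + ∫ s in (0:ℝ)..t,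
        (mulVecE (σ (Xn (phiN n s))) (g s) + b (Xn (phiN n s)))) :
    ∀ t ∈ Set.Icc (0:ℝ) T,
      ‖Xn t - Xn (phiN n t)‖ ≤ (2:ℝ) ^ (-(n:ℝ) / 2) * M * (Real.sqrt e₀ + 1) := by
  have hM : 0 ≤ M := le_trans (norm_nonneg _) (hbbd x)
  set f : ℝ → EuclideanSpace ℝ (Fin d) :=
    fun s => mulVecE (σ (Xn (phiN n s))) (g s) + b (Xn (phiN n s)) with hfdef
  -- measurability of s ↦ Xn (phiN n s)
  have hh : Measurable fun s => Xn (phiN n s) := by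
    have heq : (fun s => Xn (phiN n s)) =
        (fun k : ℤ => Xn ((k : ℝ) / 2 ^ n)) ∘ (fun s : ℝ => ⌊s * 2 ^ n⌋) := rfl
    rw [heq]
    exact measurable_from_top.comp (Int.measurable_floor.comp (measurable_id.mul_const _))
  have hfm : Measurable f := by
    apply Measurable.add
    · refine (WithLp.measurable_toLp 2 (Fin d → ℝ)).comp
        (f := fun s i => ∑ j, σ (Xn (phiN n s)) i j * g s j) ?_
      apply measurable_pi_lambda
      intro i
      apply Finset.measurable_sum
      intro j _
      exact ((measurable_pi_apply j).comp ((measurable_pi_apply i).comp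
        (hσm.comp hh))).mul ((measurable_pi_apply j).comp ((WithLp.measurable_ofLp 2 _).comp hgm))
    · exact hbm.comp hh
  have hfb : ∀ s, ‖f s‖ ≤ M * ‖g s‖ + M := fun s => by
    refine (norm_add_le _ _).trans (add_le_add ?_ (hbbd _))
    exact (mulVecE_norm_le _ _).trans (mul_le_mul_of_nonneg_right (hσbd _) (norm_nonneg _))
  -- integrability of ‖g‖ and f on [0,T]
  have hgn : IntervalIntegrable (fun s => ‖g s‖) volume 0 T := by
    apply (hgi.add (_root_.intervalIntegrable_const (c := (1:ℝ)))).mono_fun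
      hgm.norm.aestronglyMeasurable.restrict
    filter_upwards with s
    have h1 : ‖g s‖ ≤ ‖g s‖ ^ 2 + 1 := by nlinarith [norm_nonneg (g s)]
    have h2 : (0:ℝ) ≤ ‖g s‖ ^ 2 + 1 := by positivity
    simpa [Real.norm_eq_abs, abs_of_nonneg (norm_nonneg (g s)), abs_of_nonneg h2] using h1
  have hbig : IntervalIntegrable (fun s => M * ‖g s‖ + M) volume 0 T :=
    (hgn.const_mul M).add (_root_.intervalIntegrable_const (c := M))
  have hfi : IntervalIntegrable f volume 0 T := by
    apply hbig.mono_fun hfm.aestronglyMeasurable.restrict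
    filter_upwards with s
    have h2 : (0:ℝ) ≤ M * ‖g s‖ + M := by positivity
    simpa [Real.norm_eq_abs, abs_of_nonneg h2] using hfb s
  intro t ht
  obtain ⟨ht0, htT⟩ := ht
  set φ := phiN n t with hφdef
  have h2n : (0:ℝ) < 2 ^ n := by positivity
  have hφ0 : 0 ≤ φ := by
    apply div_nonneg _ h2n.le
    exact_mod_cast Int.floor_nonneg.2 (by positivity)
  have hφt : φ ≤ t := by
    rw [hφdef, phiN, div_le_iff₀ h2n]
    exact Int.floor_le _
  have hφT : φ ≤ T := hφt.trans htT
  have hδ : t - φ ≤ ((2:ℝ) ^ n)⁻¹ := by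
    have h1 : t * 2 ^ n < (⌊t * 2 ^ n⌋ : ℝ) + 1 := Int.lt_floor_add_one _
    have h4 : t ≤ ((⌊t * 2 ^ n⌋ : ℝ) + 1) / 2 ^ n := by
      rw [le_div_iff₀ h2n]; exact h1.le
    have h5 : ((⌊t * 2 ^ n⌋ : ℝ) + 1) / 2 ^ n
        = (⌊t * 2 ^ n⌋ : ℝ) / 2 ^ n + ((2:ℝ) ^ n)⁻¹ := by ring
    rw [hφdef, phiN]
    linarith [h4, h5.le]
  have hsub : Set.uIcc φ t ⊆ Set.uIcc 0 T := by
    rw [Set.uIcc_of_le hφt, Set.uIcc_of_le hT.le]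
    exact Set.Icc_subset_Icc hφ0 htT
  have hsub0φ : Set.uIcc 0 φ ⊆ Set.uIcc 0 T := by
    rw [Set.uIcc_of_le hφ0, Set.uIcc_of_le hT.le]
    exact Set.Icc_subset_Icc le_rfl hφT
  -- the basic identity
  have heq : Xn t - Xn φ = ∫ s in φ..t, f s := by
    rw [hXeq t ⟨ht0, htT⟩, hXeq φ ⟨hφ0, hφT⟩, add_sub_add_left_eq_sub]
    have hadd := integral_add_adjacent_intervals (μ := volume)
      (hfi.mono_set hsub0φ) (hfi.mono_set hsub)
    rw [← hadd, add_sub_cancel_left]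
  -- Cauchy–Schwarz on [φ, t]
  set E := ∫ s in φ..t, ‖g s‖ ^ 2 with hEdef
  have hE0 : 0 ≤ E := intervalIntegral.integral_nonneg hφt (fun s _ => by positivity)
  have hEe : E ≤ e₀ :=
    le_trans (integral_mono_interval hφ0 hφt htT
      (Filter.Eventually.of_forall fun s => by positivity) hgi) hge
  have hCS : (∫ s in φ..t, ‖g s‖) ≤ Real.sqrt (t - φ) * Real.sqrt E := by
    have hμfin : IsFiniteMeasure (volume.restrict (Set.Ioc φ t)) :=
      ⟨by rw [Measure.restrict_apply_univ]; exact measure_Ioc_lt_top⟩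
    have h2 : ENNReal.ofReal (2:ℝ) = 2 := by norm_num
    have hint : Integrable (fun s => ‖g s‖ ^ 2) (volume.restrict (Set.Ioc φ t)) :=
      (hgi.mono_set hsub).1
    have hmem : MemLp (fun s => ‖g s‖) (ENNReal.ofReal 2) (volume.restrict (Set.Ioc φ t)) := by
      rw [h2]
      exact (memLp_two_iff_integrable_sq (hgm.norm.aestronglyMeasurable.restrict)).2 hint
    have hone : MemLp (fun _ : ℝ => (1:ℝ)) (ENNReal.ofReal 2) (volume.restrict (Set.Ioc φ t)) :=
      memLp_const 1
    have hpq : Real.HolderConjugate 2 2 := Real.HolderConjugate.two_two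
    have h := MeasureTheory.integral_mul_le_Lp_mul_Lq_of_nonneg hpq
      (Filter.Eventually.of_forall fun s => norm_nonneg (g s))
      (Filter.Eventually.of_forall fun _ => zero_le_one) hmem hone
    simp only [mul_one] at h
    have e1 : ∫ a, ‖g a‖ ∂(volume.restrict (Set.Ioc φ t)) = ∫ s in φ..t, ‖g s‖ :=
      (intervalIntegral.integral_of_le hφt).symm
    have e2 : ∫ a, ‖g a‖ ^ (2:ℝ) ∂(volume.restrict (Set.Ioc φ t)) = E := by
      rw [hEdef, intervalIntegral.integral_of_le hφt]
      simp [Real.rpow_two]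
    have e3 : ∫ _a, (1:ℝ) ^ (2:ℝ) ∂(volume.restrict (Set.Ioc φ t)) = t - φ := by
      simp [Real.one_rpow, Measure.restrict_apply_univ, Real.volume_Ioc,
        ENNReal.toReal_ofReal (sub_nonneg.2 hφt), hφt]
    rw [e1, e2, e3] at h
    calc (∫ s in φ..t, ‖g s‖) ≤ E ^ (1/(2:ℝ)) * (t - φ) ^ (1/(2:ℝ)) := h
      _ = Real.sqrt (t - φ) * Real.sqrt E := by
          rw [← Real.sqrt_eq_rpow, ← Real.sqrt_eq_rpow]; ring
  -- numeric endgame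
  set β := (2:ℝ) ^ (-(n:ℝ) / 2) with hβdef
  have hβpos : 0 < β := Real.rpow_pos_of_pos (by norm_num) _
  have hβsq : β ^ 2 = ((2:ℝ) ^ n)⁻¹ := by
    rw [hβdef, ← Real.rpow_natCast ((2:ℝ) ^ (-(n:ℝ) / 2)) 2, ← Real.rpow_mul (by norm_num)]
    have : -(n:ℝ) / 2 * (2:ℕ) = -(n:ℝ) := by push_cast; ring
    rw [this, Real.rpow_neg (by norm_num), Real.rpow_natCast]
  have hβ1 : β ≤ 1 := by
    apply Real.rpow_le_one_of_one_le_of_nonpos (by norm_num)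
    have : (0:ℝ) ≤ (n:ℝ) / 2 := by positivity
    linarith [neg_div 2 (n:ℝ)]
  have hδβ2 : t - φ ≤ β ^ 2 := by rw [hβsq]; exact hδ
  have hsd : Real.sqrt (t - φ) ≤ β := by
    rw [show β = Real.sqrt (β ^ 2) from (Real.sqrt_sq hβpos.le).symm]
    exact Real.sqrt_le_sqrt hδβ2
  have hδβ : t - φ ≤ β := hδβ2.trans (by nlinarith)
  have hsE : Real.sqrt E ≤ Real.sqrt e₀ := Real.sqrt_le_sqrt hEe
  calc ‖Xn t - Xn φ‖ = ‖∫ s in φ..t, f s‖ := by rw [heq]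
    _ ≤ ∫ s in φ..t, ‖f s‖ := intervalIntegral.norm_integral_le_integral_norm hφt
    _ ≤ ∫ s in φ..t, (M * ‖g s‖ + M) := by
        apply intervalIntegral.integral_mono_on hφt (hfi.mono_set hsub).norm
          (hbig.mono_set hsub) (fun s _ => hfb s)
    _ = M * (∫ s in φ..t, ‖g s‖) + M * (t - φ) := by
        rw [intervalIntegral.integral_add ((hgn.mono_set hsub).const_mul M)
          (_root_.intervalIntegrable_const (c := M)), intervalIntegral.integral_const_mul,
          intervalIntegral.integral_const, smul_eq_mul]
        ring
    _ ≤ M * (Real.sqrt (t - φ) * Real.sqrt E) + M * (t - φ) :=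
        add_le_add (mul_le_mul_of_nonneg_left hCS hM) le_rfl
    _ ≤ M * (β * Real.sqrt e₀) + M * β :=
        add_le_add (mul_le_mul_of_nonneg_left
          (mul_le_mul hsd hsE (Real.sqrt_nonneg _) hβpos.le) hM)
          (mul_le_mul_of_nonneg_left hδβ hM)
    _ = β * M * (Real.sqrt e₀ + 1) := by ring
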